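/- Product formula for multiple Wick polynomials: for index sequences J_1,...,J_L, J' with |J'|+Σ_ℓ|J_ℓ| ≤ N and all moments of order N finite, E[ ∏_{ℓ=1}^L :y^{J_ℓ}: · y^{J'} ] = Σ_{π∈P(I)} ∏_{A∈π} ( κ[y_A] · 1(A ⊄ J_ℓ for every ℓ) ), where I is the disjoint union J_1 ⊔ ... ⊔ J_L ⊔ J' and the indicator excludes every partition with a block entirely contained in some single J_ℓ. -/

import Mathlib

open MeasureTheory Finset

/-- The moment `E[y^A]` of the labeled family `(y i)_{i ∈ A}`. -/
noncomputable def mom {Ω : Type*} [MeasurableSpace Ω] {ι : Type*}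
    (μ : Measure Ω) (y : ι → Ω → ℝ) (A : Finset ι) : ℝ :=
  ∫ ω, ∏ i ∈ A, y i ω ∂μ

open scoped Classical in
/-- Set partitions of a finite (label) set `A`: finsets of nonempty pairwise
disjoint blocks whose union is `A`. -/
noncomputable def partitionsOf {ι : Type*} (A : Finset ι) : Finset (Finset (Finset ι)) :=
  A.powerset.powerset.filter fun π =>
    (∀ B ∈ π, B.Nonempty) ∧ (∀ B ∈ π, ∀ C ∈ π, B ≠ C → Disjoint B C) ∧ π.sup id = A

/-- The joint cumulant `κ[y_A]`, defined by the (Möbius-inverted form of the)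
moments-to-cumulants recursion. -/
noncomputable def cum {Ω : Type*} [MeasurableSpace Ω] {ι : Type*}
    (μ : Measure Ω) (y : ι → Ω → ℝ) (A : Finset ι) : ℝ :=
  ∑ π ∈ partitionsOf A,
    (-1 : ℝ) ^ (π.card - 1) * (Nat.factorial (π.card - 1)) * ∏ B ∈ π, mom μ y B

/-- The Wick polynomial `:y^I:` defined by the recursion
`:y^I: = y^I − Σ_{∅≠E⊆I} E[y^E]·:y^{I∖E}:`, with `:y^∅: = 1`. -/
noncomputable def wick {Ω : Type*} [MeasurableSpace Ω] {ι : Type*} [DecidableEq ι]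
    (μ : Measure Ω) (y : ι → Ω → ℝ) (I : Finset ι) : Ω → ℝ :=
  fun ω => (∏ i ∈ I, y i ω) -
    ∑ E ∈ (I.powerset.filter fun E => E ≠ ∅).attach,
      mom μ y E.1 * wick μ y (I \ E.1) ω
termination_by I.card
decreasing_by
  have h := E.2
  simp only [Finset.mem_filter, Finset.mem_powerset] at h
  exact Finset.card_lt_card (Finset.sdiff_ssubset h.1 (Finset.nonempty_iff_ne_empty.mpr h.2))

section
variable {ι : Type*}

/-- Instance-free characterization of membership in `partitionsOf`. -/
lemma mem_partitionsOf {A : Finset ι} {π : Finset (Finset ι)} :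
    π ∈ partitionsOf A ↔ (∀ B ∈ π, B ⊆ A) ∧ (∀ B ∈ π, B.Nonempty) ∧
      (∀ B ∈ π, ∀ C ∈ π, B ≠ C → Disjoint B C) ∧ (∀ a ∈ A, ∃ B ∈ π, a ∈ B) := by
  classical
  simp only [partitionsOf, Finset.mem_filter, Finset.mem_powerset]
  constructor
  · rintro ⟨h, h1, h2, h3⟩
    refine ⟨fun B hB => Finset.mem_powerset.1 (h hB), h1, h2, fun a ha => ?_⟩
    rw [← h3] at ha
    simpa using (Finset.mem_sup.1 ha)
  · rintro ⟨h, h1, h2, h3⟩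
    refine ⟨fun B hB => Finset.mem_powerset.2 (h B hB), h1, h2, ?_⟩
    apply Finset.Subset.antisymm
    · intro a ha
      rcases Finset.mem_sup.1 ha with ⟨B, hB, haB⟩
      exact h B hB haB
    · intro a ha
      rcases h3 a ha with ⟨B, hB, haB⟩
      exact Finset.mem_sup.2 ⟨B, hB, haB⟩
end
section
variable {ι : Type*}

lemma blocks_subset {A : Finset ι} {π : Finset (Finset ι)} (h : π ∈ partitionsOf A)
    {B : Finset ι} (hB : B ∈ π) : B ⊆ A := (mem_partitionsOf.1 h).1 B hB

lemma blocks_nonempty {A : Finset ι} {π : Finset (Finset ι)} (h : π ∈ partitionsOf A)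
    {B : Finset ι} (hB : B ∈ π) : B.Nonempty := (mem_partitionsOf.1 h).2.1 B hB

lemma blocks_disjoint {A : Finset ι} {π : Finset (Finset ι)} (h : π ∈ partitionsOf A)
    {B C : Finset ι} (hB : B ∈ π) (hC : C ∈ π) (hBC : B ≠ C) : Disjoint B C :=
  (mem_partitionsOf.1 h).2.2.1 B hB C hC hBC

lemma blocks_cover {A : Finset ι} {π : Finset (Finset ι)} (h : π ∈ partitionsOf A)
    {a : ι} (ha : a ∈ A) : ∃ B ∈ π, a ∈ B := (mem_partitionsOf.1 h).2.2.2 a ha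

lemma partitionsOf_sup [DecidableEq ι] {A : Finset ι} {π : Finset (Finset ι)}
    (h : π ∈ partitionsOf A) : π.sup id = A := by
  apply Finset.Subset.antisymm
  · intro a ha
    rcases Finset.mem_sup.1 ha with ⟨B, hB, haB⟩
    exact blocks_subset h hB haB
  · intro a ha
    rcases blocks_cover h ha with ⟨B, hB, haB⟩
    exact Finset.mem_sup.2 ⟨B, hB, haB⟩

lemma partitionsOf_empty_mem : (∅ : Finset (Finset ι)) ∈ partitionsOf (∅ : Finset ι) := by
  simp [mem_partitionsOf]

lemma eq_empty_of_mem_partitionsOf_empty {π : Finset (Finset ι)}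
    (h : π ∈ partitionsOf (∅ : Finset ι)) : π = ∅ := by
  rcases Finset.eq_empty_or_nonempty π with h' | h'
  · exact h'
  · rcases h' with ⟨B, hB⟩
    rcases blocks_nonempty h hB with ⟨a, ha⟩
    exact absurd (blocks_subset h hB ha) (by simp)

lemma partitionsOf_empty : partitionsOf (∅ : Finset ι) = {∅} := by
  apply Finset.Subset.antisymm
  · intro π hπ; simp [eq_empty_of_mem_partitionsOf_empty hπ]
  · intro π hπ; simp only [Finset.mem_singleton] at hπ; subst hπ; exact partitionsOf_empty_mem

lemma singleton_mem_partitionsOf {A : Finset ι} (hA : A.Nonempty) :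
    ({A} : Finset (Finset ι)) ∈ partitionsOf A := by
  simp only [mem_partitionsOf, Finset.mem_singleton]
  refine ⟨?_, ?_, ?_, ?_⟩
  · rintro B rfl; exact Finset.Subset.refl _
  · rintro B rfl; exact hA
  · rintro B rfl C rfl h; exact absurd rfl h
  · exact fun a ha => ⟨A, rfl, ha⟩

lemma partitionsOf_nonempty_blockset {A : Finset ι} (hA : A.Nonempty)
    {π : Finset (Finset ι)} (h : π ∈ partitionsOf A) : π.Nonempty := by
  rcases hA with ⟨a, ha⟩
  rcases blocks_cover h ha with ⟨B, hB, _⟩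
  exact ⟨B, hB⟩

/-- the unique block containing a given element -/
lemma exists_unique_block {A : Finset ι} {π : Finset (Finset ι)} (h : π ∈ partitionsOf A)
    {a : ι} (ha : a ∈ A) : ∃! B, B ∈ π ∧ a ∈ B := by
  rcases blocks_cover h ha with ⟨B, hB, haB⟩
  refine ⟨B, ⟨hB, haB⟩, ?_⟩
  rintro C ⟨hC, haC⟩
  by_contra hne
  exact Finset.disjoint_left.1 (blocks_disjoint h hC hB hne) haC haB

lemma card_eq_one_partition {A : Finset ι} (hA : A.Nonempty) {π : Finset (Finset ι)}
    (h : π ∈ partitionsOf A) (hc : π.card = 1) : π = {A} := by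
  rcases Finset.card_eq_one.1 hc with ⟨B, rfl⟩
  suffices hBA : B = A by rw [hBA]
  apply Finset.Subset.antisymm (blocks_subset h (Finset.mem_singleton_self B))
  intro a ha
  rcases blocks_cover h ha with ⟨C, hC, haC⟩
  simp only [Finset.mem_singleton] at hC
  rwa [hC] at haC

/-- union of partitions of disjoint sets -/
lemma union_mem_partitionsOf [DecidableEq ι] {E F : Finset ι} (hEF : Disjoint E F)
    {σ τ : Finset (Finset ι)} (hσ : σ ∈ partitionsOf E) (hτ : τ ∈ partitionsOf F) :
    σ ∪ τ ∈ partitionsOf (E ∪ F) := by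
  simp only [mem_partitionsOf, Finset.mem_union] at *
  obtain ⟨s1, s2, s3, s4⟩ := hσ
  obtain ⟨t1, t2, t3, t4⟩ := hτ
  refine ⟨?_, ?_, ?_, ?_⟩
  · rintro B (hB | hB)
    · exact (s1 B hB).trans Finset.subset_union_left
    · exact (t1 B hB).trans Finset.subset_union_right
  · rintro B (hB | hB); exacts [s2 B hB, t2 B hB]
  · have cross : ∀ B ∈ σ, ∀ C ∈ τ, Disjoint B C := fun B hB C hC =>
      hEF.mono (s1 B hB) (t1 C hC)
    rintro B (hB | hB) C (hC | hC) hne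
    · exact s3 B hB C hC hne
    · exact cross B hB C hC
    · exact (cross C hC B hB).symm
    · exact t3 B hB C hC hne
  · rintro a (ha | ha)
    · rcases s4 a ha with ⟨B, hB, haB⟩; exact ⟨B, Or.inl hB, haB⟩
    · rcases t4 a ha with ⟨B, hB, haB⟩; exact ⟨B, Or.inr hB, haB⟩

/-- block-sets of partitions of disjoint nonempty ground sets are disjoint -/
lemma partition_blocksets_disjoint {E F : Finset ι} (hEF : Disjoint E F)
    {σ τ : Finset (Finset ι)} (hσ : σ ∈ partitionsOf E) (hτ : τ ∈ partitionsOf F) :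
    Disjoint σ τ := by
  rw [Finset.disjoint_left]
  intro B hBσ hBτ
  rcases blocks_nonempty hσ hBσ with ⟨a, ha⟩
  exact Finset.disjoint_left.1 hEF (blocks_subset hσ hBσ ha) (blocks_subset hτ hBτ ha)

end
section
variable {ι : Type*}

/-- Splitting a sum over partitions according to a predicate on blocks. -/
lemma partition_split [DecidableEq ι] (f : Finset ι → ℝ) (p : Finset ι → Prop)
    [DecidablePred p] (I : Finset ι) :
    ∑ π ∈ partitionsOf I, ∏ B ∈ π, f B
      = ∑ E ∈ I.powerset,
          (∑ σ ∈ (partitionsOf E).filter fun σ => ∀ B ∈ σ, p B, ∏ B ∈ σ, f B) *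
          (∑ τ ∈ (partitionsOf (I \ E)).filter fun τ => ∀ B ∈ τ, ¬ p B, ∏ B ∈ τ, f B) := by
  classical
  have hmaps : ∀ π ∈ partitionsOf I, (π.filter p).sup id ∈ I.powerset := by
    intro π hπ
    rw [Finset.mem_powerset]
    intro a ha
    rcases Finset.mem_sup.1 ha with ⟨B, hB, haB⟩
    exact blocks_subset hπ (Finset.mem_of_mem_filter B hB) haB
  rw [← Finset.sum_fiberwise_of_maps_to hmaps]
  refine Finset.sum_congr rfl fun E hE => ?_
  rw [Finset.sum_mul_sum, ← Finset.sum_product']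
  refine Finset.sum_bij' (fun π _ => (π.filter p, π.filter fun B => ¬ p B))
    (fun x _ => x.1 ∪ x.2) ?_ ?_ ?_ ?_ ?_
  · -- forward membership
    intro π hπ
    simp only [Finset.mem_filter] at hπ
    obtain ⟨hπI, hkey⟩ := hπ
    have hgood : π.filter p ∈ partitionsOf E := by
      rw [mem_partitionsOf]
      refine ⟨?_, ?_, ?_, ?_⟩
      · intro B hB
        rw [← hkey]
        exact Finset.le_sup (f := id) hB
      · exact fun B hB => blocks_nonempty hπI (Finset.mem_of_mem_filter B hB)
      · exact fun B hB C hC h =>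
          blocks_disjoint hπI (Finset.mem_of_mem_filter B hB) (Finset.mem_of_mem_filter C hC) h
      · intro a ha
        rw [← hkey] at ha
        simpa using Finset.mem_sup.1 ha
    have hbad : (π.filter fun B => ¬ p B) ∈ partitionsOf (I \ E) := by
      rw [mem_partitionsOf]
      refine ⟨?_, ?_, ?_, ?_⟩
      · intro B hB
        rw [Finset.mem_filter] at hB
        intro a haB
        rw [Finset.mem_sdiff]
        refine ⟨blocks_subset hπI hB.1 haB, fun haE => ?_⟩
        rw [← hkey] at haE
        rcases Finset.mem_sup.1 haE with ⟨C, hC, haC⟩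
        have hBC : B ≠ C := by
          rintro rfl
          exact hB.2 (Finset.mem_filter.1 hC).2
        exact Finset.disjoint_left.1
          (blocks_disjoint hπI hB.1 (Finset.mem_of_mem_filter C hC) hBC) haB haC
      · exact fun B hB => blocks_nonempty hπI (Finset.mem_of_mem_filter B hB)
      · exact fun B hB C hC h =>
          blocks_disjoint hπI (Finset.mem_of_mem_filter B hB) (Finset.mem_of_mem_filter C hC) h
      · intro a ha
        rw [Finset.mem_sdiff] at ha
        rcases blocks_cover hπI ha.1 with ⟨B, hB, haB⟩
        refine ⟨B, Finset.mem_filter.2 ⟨hB, fun hpB => ha.2 ?_⟩, haB⟩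
        rw [← hkey]
        exact Finset.mem_sup.2 ⟨B, Finset.mem_filter.2 ⟨hB, hpB⟩, haB⟩
    exact Finset.mem_product.2
      ⟨Finset.mem_filter.2 ⟨hgood, fun B hB => (Finset.mem_filter.1 hB).2⟩,
       Finset.mem_filter.2 ⟨hbad, fun B hB => (Finset.mem_filter.1 hB).2⟩⟩
  · -- backward membership
    rintro ⟨σ, τ⟩ hx
    simp only [Finset.mem_product, Finset.mem_filter] at hx
    obtain ⟨⟨hσ, hσp⟩, ⟨hτ, hτp⟩⟩ := hx
    have hEI : E ⊆ I := Finset.mem_powerset.1 hE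
    have hdisj : Disjoint E (I \ E) := Finset.disjoint_sdiff
    have hmem : σ ∪ τ ∈ partitionsOf I := by
      have := union_mem_partitionsOf hdisj hσ hτ
      rwa [Finset.union_sdiff_of_subset hEI] at this
    have hfσ : (σ ∪ τ).filter p = σ := by
      rw [Finset.filter_union, Finset.filter_true_of_mem hσp,
        Finset.filter_false_of_mem (fun B hB => (hτp B hB : ¬ p B)), Finset.union_empty]
    refine Finset.mem_filter.2 ⟨hmem, ?_⟩
    rw [hfσ]
    exact partitionsOf_sup hσ
  · -- left inverse
    intro π hπ
    exact Finset.filter_union_filter_not_eq p π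
  · -- right inverse
    rintro ⟨σ, τ⟩ hx
    simp only [Finset.mem_product, Finset.mem_filter] at hx
    obtain ⟨⟨hσ, hσp⟩, ⟨hτ, hτp⟩⟩ := hx
    have h1 : (σ ∪ τ).filter p = σ := by
      rw [Finset.filter_union, Finset.filter_true_of_mem hσp,
        Finset.filter_false_of_mem (fun B hB => (hτp B hB : ¬ p B)), Finset.union_empty]
    have h2 : ((σ ∪ τ).filter fun B => ¬ p B) = τ := by
      rw [Finset.filter_union, Finset.filter_false_of_mem (fun B hB => not_not_intro (hσp B hB)),
        Finset.filter_true_of_mem hτp, Finset.empty_union]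
    simp [h1, h2]
  · -- summand equality
    intro π hπ
    simp only
    rw [← Finset.prod_filter_mul_prod_filter_not π p f]
end
section
variable {ι : Type*} [DecidableEq ι]

lemma filter_all_not_mem {D : Finset ι} {a : ι} (ha : a ∉ D) :
    ((partitionsOf D).filter fun π => ∀ B ∈ π, a ∉ B) = partitionsOf D :=
  Finset.filter_true_of_mem fun π hπ B hB haB => ha (blocks_subset hπ hB haB)

lemma filter_all_mem_of_not_mem {E : Finset ι} {a : ι} (hE : E ≠ ∅) (ha : a ∉ E) :
    ((partitionsOf E).filter fun σ => ∀ B ∈ σ, a ∈ B) = ∅ := by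
  rw [Finset.filter_eq_empty_iff]
  intro σ hσ h
  rcases Finset.nonempty_iff_ne_empty.2 hE with ⟨b, hb⟩
  rcases blocks_cover hσ hb with ⟨B, hB, _⟩
  exact ha (blocks_subset hσ hB (h B hB))

lemma filter_all_mem_of_mem {E : Finset ι} {a : ι} (ha : a ∈ E) :
    ((partitionsOf E).filter fun σ => ∀ B ∈ σ, a ∈ B) = {{E}} := by
  apply Finset.Subset.antisymm
  · intro σ hσ
    rw [Finset.mem_filter] at hσ
    obtain ⟨hσE, hall⟩ := hσ
    rcases blocks_cover hσE ha with ⟨B, hB, _⟩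
    have hcard : σ = {B} := by
      apply Finset.Subset.antisymm
      · intro C hC
        rw [Finset.mem_singleton]
        by_contra hne
        exact Finset.disjoint_left.1 (blocks_disjoint hσE hC hB hne) (hall C hC) (hall B hB)
      · simpa using hB
    exact Finset.mem_singleton.2
      (card_eq_one_partition ⟨a, ha⟩ hσE (by rw [hcard]; exact Finset.card_singleton B))
  · intro σ hσ
    rw [Finset.mem_singleton] at hσ
    subst hσ
    exact Finset.mem_filter.2 ⟨singleton_mem_partitionsOf ⟨a, ha⟩,
      by simpa using ha⟩

lemma filter_all_subset_of_subset {E K : Finset ι} (hEK : E ⊆ K) :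
    ((partitionsOf E).filter fun σ => ∀ B ∈ σ, B ⊆ K) = partitionsOf E :=
  Finset.filter_true_of_mem fun σ hσ B hB => (blocks_subset hσ hB).trans hEK

lemma filter_all_subset_of_not_subset {E K : Finset ι} (hEK : ¬ E ⊆ K) :
    ((partitionsOf E).filter fun σ => ∀ B ∈ σ, B ⊆ K) = ∅ := by
  rw [Finset.filter_eq_empty_iff]
  intro σ hσ h
  apply hEK
  intro a ha
  rcases blocks_cover hσ ha with ⟨B, hB, haB⟩
  exact h B hB haB

lemma sum_filter_all_prod (q : Finset ι → Prop) [DecidablePred q] (f : Finset ι → ℝ)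
    (S : Finset (Finset (Finset ι))) :
    ∑ π ∈ S.filter fun π => ∀ B ∈ π, q B, ∏ B ∈ π, f B
      = ∑ π ∈ S, ∏ B ∈ π, (f B * if q B then 1 else 0) := by
  rw [Finset.sum_filter]
  refine Finset.sum_congr rfl fun π _ => ?_
  rw [Finset.prod_mul_distrib, Finset.prod_boole]
  split_ifs <;> simp

lemma erase_mem_partitionsOf {A : Finset ι} {π : Finset (Finset ι)}
    (hπ : π ∈ partitionsOf A) {D : Finset ι} (hD : D ∈ π) :
    π.erase D ∈ partitionsOf (A \ D) := by
  rw [mem_partitionsOf]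
  refine ⟨?_, ?_, ?_, ?_⟩
  · intro B hB
    rw [Finset.mem_erase] at hB
    intro x hx
    rw [Finset.mem_sdiff]
    exact ⟨blocks_subset hπ hB.2 hx,
      fun hxD => Finset.disjoint_left.1 (blocks_disjoint hπ hB.2 hD hB.1) hx hxD⟩
  · exact fun B hB => blocks_nonempty hπ (Finset.mem_of_mem_erase hB)
  · exact fun B hB C hC h =>
      blocks_disjoint hπ (Finset.mem_of_mem_erase hB) (Finset.mem_of_mem_erase hC) h
  · intro x hx
    rw [Finset.mem_sdiff] at hx
    rcases blocks_cover hπ hx.1 with ⟨B, hB, hxB⟩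
    refine ⟨B, Finset.mem_erase.2 ⟨fun h => hx.2 (h ▸ hxB), hB⟩, hxB⟩

lemma filter_not_mem_eq_erase {A : Finset ι} {π : Finset (Finset ι)}
    (hπ : π ∈ partitionsOf A) {a : ι} {B₀ : Finset ι} (hB₀ : B₀ ∈ π) (haB₀ : a ∈ B₀) :
    (π.filter fun D => a ∉ D) = π.erase B₀ := by
  ext C
  simp only [Finset.mem_filter, Finset.mem_erase]
  constructor
  · rintro ⟨hC, haC⟩
    exact ⟨fun h => haC (h ▸ haB₀), hC⟩
  · rintro ⟨hne, hC⟩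
    exact ⟨hC, fun haC =>
      Finset.disjoint_left.1 (blocks_disjoint hπ hC hB₀ hne) haC haB₀⟩

end
/-- the universal coefficients in the moments-to-cumulants formula -/
noncomputable def kcoef (k : ℕ) : ℝ := (-1 : ℝ) ^ (k - 1) * (Nat.factorial (k - 1) : ℝ)

lemma cum_eq_kcoef {Ω : Type*} [MeasurableSpace Ω] {ι : Type*} (μ : MeasureTheory.Measure Ω)
    (y : ι → Ω → ℝ) (A : Finset ι) :
    cum μ y A = ∑ π ∈ partitionsOf A, kcoef π.card * ∏ B ∈ π, mom μ y B := rfl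

lemma mom_empty {Ω : Type*} [MeasurableSpace Ω] {ι : Type*} (μ : MeasureTheory.Measure Ω)
    [MeasureTheory.IsProbabilityMeasure μ] (y : ι → Ω → ℝ) :
    mom μ y (∅ : Finset ι) = 1 := by
  simp [mom]

section
variable {Ω : Type*} [MeasurableSpace Ω] {ι : Type*} [DecidableEq ι]

lemma kcoef_key {k : ℕ} (hk : 1 ≤ k) :
    kcoef k + ((k - 1 : ℕ) : ℝ) * kcoef (k - 1) = if k = 1 then 1 else 0 := by
  match k, hk with
  | 1, _ => simp [kcoef]
  | (m+2), _ =>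
    have h2 : ((m + 2 : ℕ) - 1 : ℕ) = m + 1 := rfl
    have h1 : ((m + 1 : ℕ) - 1 : ℕ) = m := rfl
    simp only [kcoef, h2, h1, if_neg (by omega : ¬ m + 2 = 1)]
    simp [Nat.factorial_succ, pow_succ]
    push_cast
    ring

/-- The key recursion: summing cumulants of sets containing a fixed element. -/
lemma cum_mom_recursion (μ : Measure Ω) [IsProbabilityMeasure μ] (y : ι → Ω → ℝ)
    {A : Finset ι} {a : ι} (ha : a ∈ A) :
    ∑ E ∈ A.powerset.filter fun E => a ∈ E, cum μ y E * mom μ y (A \ E)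
      = mom μ y A := by
  classical
  have hAne : A.Nonempty := ⟨a, ha⟩
  have hAmem : A ∈ A.powerset.filter fun E => a ∈ E := by
    simp [Finset.mem_filter, ha]
  rw [← Finset.add_sum_erase _ _ hAmem, Finset.sdiff_self, mom_empty, mul_one]
  have herase : (A.powerset.filter fun E => a ∈ E).erase A
      = A.powerset.filter fun E => a ∈ E ∧ E ≠ A := by
    ext E
    simp only [Finset.mem_erase, Finset.mem_filter]
    tauto
  rw [herase]
  have hsum : (∑ E ∈ A.powerset.filter fun E => a ∈ E ∧ E ≠ A, cum μ y E * mom μ y (A \ E))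
      = ∑ π ∈ partitionsOf A, ((π.filter fun D => a ∉ D).card : ℝ) *
          (kcoef (π.card - 1) * ∏ B ∈ π, mom μ y B) := by
    calc
      (∑ E ∈ A.powerset.filter fun E => a ∈ E ∧ E ≠ A, cum μ y E * mom μ y (A \ E))
          = ∑ E ∈ A.powerset.filter fun E => a ∈ E ∧ E ≠ A,
              ∑ τ ∈ partitionsOf E, kcoef τ.card * (∏ B ∈ τ, mom μ y B) * mom μ y (A \ E) := by
            refine Finset.sum_congr rfl fun E _ => ?_
            rw [cum_eq_kcoef, Finset.sum_mul]
      _ = ∑ x ∈ (A.powerset.filter fun E => a ∈ E ∧ E ≠ A).sigma (fun E => partitionsOf E),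
              kcoef x.2.card * (∏ B ∈ x.2, mom μ y B) * mom μ y (A \ x.1) :=
            Finset.sum_sigma' _ _ _
      _ = ∑ x ∈ (partitionsOf A).sigma (fun π => π.filter fun D => a ∉ D),
              kcoef (x.1.card - 1) * (∏ B ∈ x.1.erase x.2, mom μ y B) * mom μ y x.2 := by
            refine Finset.sum_nbij' (fun x => ⟨insert (A \ x.1) x.2, A \ x.1⟩)
              (fun x => ⟨A \ x.2, x.1.erase x.2⟩) ?_ ?_ ?_ ?_ ?_
            · rintro ⟨E, τ⟩ hx
              simp only [Finset.mem_sigma, Finset.mem_filter, Finset.mem_powerset] at hx ⊢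
              obtain ⟨⟨hEA, haE, hEneA⟩, hτ⟩ := hx
              have hDne : (A \ E).Nonempty :=
                Finset.sdiff_nonempty.2 fun h => hEneA (Finset.Subset.antisymm hEA h)
              have hmem : insert (A \ E) τ ∈ partitionsOf A := by
                rw [Finset.insert_eq]
                have := union_mem_partitionsOf (Finset.sdiff_disjoint)
                  (singleton_mem_partitionsOf hDne) hτ
                rwa [Finset.sdiff_union_of_subset hEA] at this
              exact ⟨hmem, Finset.mem_insert_self _ _, fun h => (Finset.mem_sdiff.1 h).2 haE⟩
            · rintro ⟨π, D⟩ hx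
              simp only [Finset.mem_sigma, Finset.mem_filter] at hx
              obtain ⟨hπ, hD, haD⟩ := hx
              have hDA : D ⊆ A := blocks_subset hπ hD
              have hDne := blocks_nonempty hπ hD
              simp only [Finset.mem_sigma, Finset.mem_filter, Finset.mem_powerset]
              refine ⟨⟨Finset.sdiff_subset, Finset.mem_sdiff.2 ⟨ha, haD⟩, fun h => ?_⟩,
                erase_mem_partitionsOf hπ hD⟩
              rw [Finset.sdiff_eq_self_iff_disjoint] at h
              rcases hDne with ⟨d, hd⟩
              exact Finset.disjoint_right.1 h hd (hDA hd)
            · rintro ⟨E, τ⟩ hx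
              simp only [Finset.mem_sigma, Finset.mem_filter, Finset.mem_powerset] at hx
              obtain ⟨⟨hEA, haE, hEneA⟩, hτ⟩ := hx
              have hDτ : A \ E ∉ τ := by
                intro h
                rcases blocks_nonempty hτ h with ⟨d, hd⟩
                exact (Finset.mem_sdiff.1 hd).2 (blocks_subset hτ h hd)
              have h1 : A \ (A \ E) = E := Finset.sdiff_sdiff_eq_self hEA
              have h2 : (insert (A \ E) τ).erase (A \ E) = τ := Finset.erase_insert hDτ
              simp only [h1, h2]
            · rintro ⟨π, D⟩ hx
              simp only [Finset.mem_sigma, Finset.mem_filter] at hx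
              obtain ⟨hπ, hD, haD⟩ := hx
              have h1 : A \ (A \ D) = D := Finset.sdiff_sdiff_eq_self (blocks_subset hπ hD)
              have h2 : insert D (π.erase D) = π := Finset.insert_erase hD
              simp only [h1, h2]
            · rintro ⟨E, τ⟩ hx
              simp only [Finset.mem_sigma, Finset.mem_filter, Finset.mem_powerset] at hx
              obtain ⟨⟨hEA, haE, hEneA⟩, hτ⟩ := hx
              have hDτ : A \ E ∉ τ := by
                intro h
                rcases blocks_nonempty hτ h with ⟨d, hd⟩
                exact (Finset.mem_sdiff.1 hd).2 (blocks_subset hτ h hd)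
              simp only [Finset.erase_insert hDτ, Finset.card_insert_of_notMem hDτ,
                Nat.add_sub_cancel]
      _ = ∑ π ∈ partitionsOf A, ∑ D ∈ π.filter fun D => a ∉ D,
              kcoef (π.card - 1) * (∏ B ∈ π.erase D, mom μ y B) * mom μ y D :=
            by rw [Finset.sum_sigma]
      _ = ∑ π ∈ partitionsOf A, ((π.filter fun D => a ∉ D).card : ℝ) *
              (kcoef (π.card - 1) * ∏ B ∈ π, mom μ y B) := by
            refine Finset.sum_congr rfl fun π hπ => ?_
            have h : ∀ D ∈ π.filter fun D => a ∉ D,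
                kcoef (π.card - 1) * (∏ B ∈ π.erase D, mom μ y B) * mom μ y D
                  = kcoef (π.card - 1) * ∏ B ∈ π, mom μ y B := fun D hD => by
              rw [mul_assoc, Finset.prod_erase_mul _ _ (Finset.mem_of_mem_filter D hD)]
            rw [Finset.sum_congr rfl h, Finset.sum_const, nsmul_eq_mul]
  rw [hsum, cum_eq_kcoef, ← Finset.sum_add_distrib]
  have hterm : ∀ π ∈ partitionsOf A,
      (kcoef π.card * ∏ B ∈ π, mom μ y B) + ((π.filter fun D => a ∉ D).card : ℝ) *
        (kcoef (π.card - 1) * ∏ B ∈ π, mom μ y B)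
      = (if π.card = 1 then 1 else 0) * ∏ B ∈ π, mom μ y B := by
    intro π hπ
    rcases blocks_cover hπ ha with ⟨B₀, hB₀, haB₀⟩
    rw [filter_not_mem_eq_erase hπ hB₀ haB₀, Finset.card_erase_of_mem hB₀]
    have hk : 1 ≤ π.card := Finset.card_pos.2 ⟨B₀, hB₀⟩
    rw [← kcoef_key hk]
    ring
  rw [Finset.sum_congr rfl hterm]
  have hfilter : (partitionsOf A).filter (fun π => π.card = 1) = {({A} : Finset (Finset ι))} := by
    ext π
    simp only [Finset.mem_filter, Finset.mem_singleton]
    constructor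
    · rintro ⟨hπ, hc⟩; exact card_eq_one_partition hAne hπ hc
    · rintro rfl; exact ⟨singleton_mem_partitionsOf hAne, Finset.card_singleton A⟩
  simp only [ite_mul, one_mul, zero_mul]
  rw [← Finset.sum_filter, hfilter, Finset.sum_singleton, Finset.prod_singleton]
end
section
variable {Ω : Type*} [MeasurableSpace Ω] {ι : Type*} [DecidableEq ι]

lemma filter_all_not_mem_of_mem {D : Finset ι} {a : ι} (ha : a ∈ D) :
    ((partitionsOf D).filter fun τ => ∀ B ∈ τ, a ∉ B) = ∅ := by
  rw [Finset.filter_eq_empty_iff]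
  intro τ hτ h
  rcases blocks_cover hτ ha with ⟨B, hB, haB⟩
  exact h B hB haB

/-- Moments-to-cumulants: the sum over all partitions of products of cumulants
gives back the moment. -/
lemma mom_eq_sum_cum (μ : Measure Ω) [IsProbabilityMeasure μ] (y : ι → Ω → ℝ)
    (A : Finset ι) :
    ∑ π ∈ partitionsOf A, ∏ B ∈ π, cum μ y B = mom μ y A := by
  classical
  induction A using Finset.strongInduction with
  | _ A ih =>
  rcases A.eq_empty_or_nonempty with rfl | ⟨a, ha⟩
  · rw [partitionsOf_empty, mom_empty μ y]
    simp
  · rw [partition_split (cum μ y) (fun B => a ∈ B) A]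
    have step : ∀ E ∈ A.powerset,
        (∑ σ ∈ (partitionsOf E).filter fun σ => ∀ B ∈ σ, a ∈ B, ∏ B ∈ σ, cum μ y B) *
        (∑ τ ∈ (partitionsOf (A \ E)).filter fun τ => ∀ B ∈ τ, a ∉ B, ∏ B ∈ τ, cum μ y B)
          = if a ∈ E then cum μ y E * mom μ y (A \ E) else 0 := by
      intro E hE
      rw [Finset.mem_powerset] at hE
      by_cases haE : a ∈ E
      · rw [if_pos haE, filter_all_mem_of_mem haE, Finset.sum_singleton, Finset.prod_singleton,
          filter_all_not_mem (by simp [haE] : a ∉ A \ E)]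
        congr 1
        exact ih _ (Finset.sdiff_ssubset hE ⟨a, haE⟩)
      · rw [if_neg haE]
        rcases eq_or_ne E ∅ with rfl | hEne
        · rw [filter_all_not_mem_of_mem (by simpa using ha : a ∈ A \ ∅)]
          simp
        · rw [filter_all_mem_of_not_mem hEne haE]
          simp
    rw [Finset.sum_congr rfl step, Finset.sum_ite, Finset.sum_const_zero, add_zero]
    exact cum_mom_recursion μ y ha
end
section
variable {Ω : Type*} [MeasurableSpace Ω] {ι : Type*} [DecidableEq ι]

/-- The combinatorial step identity. -/
lemma comb_step (μ : Measure Ω) [IsProbabilityMeasure μ] (y : ι → Ω → ℝ)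
    {I K : Finset ι} (hKI : K ⊆ I) (χ χ' : Finset ι → ℝ)
    (hχK : ∀ B : Finset ι, B.Nonempty → B ⊆ K → χ' B = 1)
    (hχ : ∀ B : Finset ι, B.Nonempty → ¬ B ⊆ K → χ B = χ' B)
    (hχ0 : ∀ B : Finset ι, B.Nonempty → B ⊆ K → χ B = 0) :
    ∑ π ∈ partitionsOf I, ∏ A ∈ π, (cum μ y A * χ' A)
      = ∑ E ∈ K.powerset,
          mom μ y E * ∑ π ∈ partitionsOf (I \ E), ∏ A ∈ π, (cum μ y A * χ A) := by
  classical
  rw [partition_split (fun A => cum μ y A * χ' A) (fun B => B ⊆ K) I]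
  have hpows : I.powerset.filter (fun E => E ⊆ K) = K.powerset := by
    ext E
    simp only [Finset.mem_filter, Finset.mem_powerset]
    exact ⟨fun h => h.2, fun h => ⟨h.trans hKI, h⟩⟩
  have step : ∀ E ∈ I.powerset,
      (∑ σ ∈ (partitionsOf E).filter fun σ => ∀ B ∈ σ, B ⊆ K,
          ∏ B ∈ σ, (cum μ y B * χ' B)) *
      (∑ τ ∈ (partitionsOf (I \ E)).filter fun τ => ∀ B ∈ τ, ¬ B ⊆ K,
          ∏ B ∈ τ, (cum μ y B * χ' B))
      = if E ⊆ K then mom μ y E * ∑ π ∈ partitionsOf (I \ E),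
          ∏ A ∈ π, (cum μ y A * χ A) else 0 := by
    intro E hE
    by_cases hEK : E ⊆ K
    · rw [if_pos hEK, filter_all_subset_of_subset hEK]
      congr 1
      · -- σ-sum is mom E
        rw [← mom_eq_sum_cum μ y E]
        refine Finset.sum_congr rfl fun σ hσ => Finset.prod_congr rfl fun B hB => ?_
        rw [hχK B (blocks_nonempty hσ hB) ((blocks_subset hσ hB).trans hEK), mul_one]
      · -- τ-sum matches χ
        rw [sum_filter_all_prod]
        refine Finset.sum_congr rfl fun τ hτ => Finset.prod_congr rfl fun B hB => ?_
        have hBne := blocks_nonempty hτ hB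
        by_cases hBK : B ⊆ K
        · rw [if_neg (not_not_intro hBK), hχ0 B hBne hBK, mul_zero, mul_zero]
        · rw [if_pos hBK, hχ B hBne hBK, mul_one]
    · rw [if_neg hEK, filter_all_subset_of_not_subset hEK]
      simp
  rw [Finset.sum_congr rfl step, Finset.sum_ite, Finset.sum_const_zero, add_zero, hpows]

lemma wick_empty (μ : Measure Ω) (y : ι → Ω → ℝ) : wick μ y (∅ : Finset ι) = fun _ => 1 := by
  funext ω
  rw [wick]
  rw [Finset.powerset_empty]
  rw [Finset.sum_eq_zero, sub_zero, Finset.prod_empty]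
  intro x _
  have hx := x.2
  rw [Finset.mem_filter, Finset.mem_singleton] at hx
  exact absurd hx.1 hx.2

lemma mem_sup_univ_iff {L : ℕ} (Js : Fin L → Finset ι) (x : ι) :
    x ∈ Finset.univ.sup Js ↔ ∃ ℓ, x ∈ Js ℓ := by
  rw [Finset.mem_sup]
  simp
end
set_option maxHeartbeats 1000000

section
variable {Ω : Type*} [MeasurableSpace Ω] {ι : Type*} [DecidableEq ι]

theorem wick_aux (μ : Measure Ω) [IsProbabilityMeasure μ] (y : ι → Ω → ℝ)
    (I₀ : Finset ι) (hint : ∀ A : Finset ι, A ⊆ I₀ → Integrable (fun ω => ∏ i ∈ A, y i ω) μ) :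
    ∀ (n L : ℕ) (Js : Fin L → Finset ι) (J' : Finset ι),
      (∑ ℓ, (Js ℓ).card) = n →
      (∀ ℓ ℓ', ℓ ≠ ℓ' → Disjoint (Js ℓ) (Js ℓ')) →
      (∀ ℓ, Disjoint (Js ℓ) J') →
      Finset.univ.sup Js ∪ J' ⊆ I₀ →
      Integrable (fun ω => (∏ ℓ, wick μ y (Js ℓ) ω) * ∏ i ∈ J', y i ω) μ ∧
      (∫ ω, (∏ ℓ, wick μ y (Js ℓ) ω) * ∏ i ∈ J', y i ω ∂μ)
        = ∑ π ∈ partitionsOf (Finset.univ.sup Js ∪ J'),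
            ∏ A ∈ π, (cum μ y A * if ∀ ℓ, ¬ A ⊆ Js ℓ then 1 else 0) := by
  intro n
  induction n using Nat.strong_induction_on with
  | _ n IH =>
  intro L Js J' hn hdJ hdJ' hsub
  by_cases hbase : ∀ ℓ, Js ℓ = ∅
  · -- base case : all wick factors are trivial
    have hfun : (fun ω => (∏ ℓ, wick μ y (Js ℓ) ω) * ∏ i ∈ J', y i ω)
        = fun ω => ∏ i ∈ J', y i ω := by
      funext ω
      rw [Finset.prod_eq_one fun ℓ _ => by simp [hbase ℓ, wick_empty], one_mul]
    have hG : Finset.univ.sup Js ∪ J' = J' := by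
      have hsup : Finset.univ.sup Js = ∅ := by
        apply Finset.eq_empty_of_forall_notMem
        intro x hx
        rcases (mem_sup_univ_iff Js x).1 hx with ⟨ℓ, hℓ⟩
        rw [hbase ℓ] at hℓ
        exact Finset.notMem_empty x hℓ
      rw [hsup, Finset.empty_union]
    have hJ'I₀ : J' ⊆ I₀ := Finset.subset_union_right.trans hsub
    refine ⟨by rw [hfun]; exact hint J' hJ'I₀, ?_⟩
    rw [hfun, hG]
    calc (∫ ω, ∏ i ∈ J', y i ω ∂μ) = mom μ y J' := rfl
      _ = ∑ π ∈ partitionsOf J', ∏ B ∈ π, cum μ y B := (mom_eq_sum_cum μ y J').symm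
      _ = ∑ π ∈ partitionsOf J', ∏ A ∈ π, (cum μ y A * if ∀ ℓ, ¬ A ⊆ Js ℓ then 1 else 0) := by
        refine Finset.sum_congr rfl fun π hπ => Finset.prod_congr rfl fun A hA => ?_
        rw [if_pos, mul_one]
        intro ℓ hAJ
        rcases blocks_nonempty hπ hA with ⟨x, hx⟩
        rw [hbase ℓ] at hAJ
        exact Finset.notMem_empty x (hAJ hx)
  · -- inductive step
    push_neg at hbase
    obtain ⟨ℓ₀, hKne'⟩ := hbase
    set K := Js ℓ₀ with hKdef
    have hKne : K.Nonempty := hKne'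
    set S := K.powerset.filter (fun E => E ≠ ∅) with hSdef
    -- cardinality bookkeeping
    have hsplitn : K.card + ∑ ℓ ∈ Finset.univ \ {ℓ₀}, (Js ℓ).card = n := by
      rw [← hn, Finset.sum_eq_sum_sdiff_singleton_add (Finset.mem_univ ℓ₀)]
      ring
    have hupdcard : ∀ (V : Finset ι),
        (∑ ℓ, (Function.update Js ℓ₀ V ℓ).card)
          = V.card + ∑ ℓ ∈ Finset.univ \ {ℓ₀}, (Js ℓ).card := by
      intro V
      have : (fun ℓ => (Function.update Js ℓ₀ V ℓ).card)
          = Function.update (fun ℓ => (Js ℓ).card) ℓ₀ V.card := by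
        funext ℓ
        rcases eq_or_ne ℓ ℓ₀ with rfl | hne
        · simp
        · simp [Function.update_of_ne hne]
      rw [this, Finset.sum_update_of_mem (Finset.mem_univ ℓ₀)]
    -- ground set identities
    have hKG : K ⊆ Finset.univ.sup Js ∪ J' :=
      (Finset.le_sup (Finset.mem_univ ℓ₀)).trans Finset.subset_union_left
    have hG1 : Finset.univ.sup (Function.update Js ℓ₀ ∅) ∪ (K ∪ J')
        = Finset.univ.sup Js ∪ J' := by
      ext x
      simp only [Finset.mem_union, mem_sup_univ_iff]
      constructor
      · rintro (⟨ℓ, hx⟩ | hx | hx)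
        · rcases eq_or_ne ℓ ℓ₀ with rfl | hne
          · rw [Function.update_self] at hx
            exact absurd hx (Finset.notMem_empty x)
          · rw [Function.update_of_ne hne] at hx
            exact Or.inl ⟨ℓ, hx⟩
        · exact Or.inl ⟨ℓ₀, hx⟩
        · exact Or.inr hx
      · rintro (⟨ℓ, hx⟩ | hx)
        · rcases eq_or_ne ℓ ℓ₀ with rfl | hne
          · exact Or.inr (Or.inl hx)
          · exact Or.inl ⟨ℓ, by rw [Function.update_of_ne hne]; exact hx⟩
        · exact Or.inr (Or.inr hx)
    have hG2 : ∀ E ∈ S, Finset.univ.sup (Function.update Js ℓ₀ (K \ E)) ∪ J'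
        = (Finset.univ.sup Js ∪ J') \ E := by
      intro E hE
      rw [hSdef, Finset.mem_filter, Finset.mem_powerset] at hE
      obtain ⟨hEK, _⟩ := hE
      ext x
      simp only [Finset.mem_union, mem_sup_univ_iff, Finset.mem_sdiff]
      constructor
      · rintro (⟨ℓ, hx⟩ | hx)
        · rcases eq_or_ne ℓ ℓ₀ with hq | hne
          · rw [hq, Function.update_self, Finset.mem_sdiff] at hx
            exact ⟨Or.inl ⟨ℓ₀, hx.1⟩, hx.2⟩
          · rw [Function.update_of_ne hne] at hx
            refine ⟨Or.inl ⟨ℓ, hx⟩, fun hxE => ?_⟩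
            exact Finset.disjoint_left.1 (hdJ ℓ ℓ₀ hne) hx (hEK hxE)
        · refine ⟨Or.inr hx, fun hxE => ?_⟩
          exact Finset.disjoint_left.1 (hdJ' ℓ₀) (hEK hxE) hx
      · rintro ⟨⟨ℓ, hx⟩ | hx, hxE⟩
        · rcases eq_or_ne ℓ ℓ₀ with h | hne
          · refine Or.inl ⟨ℓ₀, ?_⟩
            rw [Function.update_self, Finset.mem_sdiff]
            exact ⟨show x ∈ Js ℓ₀ by rw [← h]; exact hx, hxE⟩
          · exact Or.inl ⟨ℓ, by rw [Function.update_of_ne hne]; exact hx⟩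
        · exact Or.inr hx
    -- pointwise expansion of the integrand
    have hP1 : ∀ ω : Ω, (∏ ℓ, wick μ y (Function.update Js ℓ₀ ∅ ℓ) ω)
        = ∏ ℓ ∈ Finset.univ \ {ℓ₀}, wick μ y (Js ℓ) ω := by
      intro ω
      rw [Finset.prod_eq_prod_diff_singleton_mul (Finset.mem_univ ℓ₀)]
      rw [Function.update_self, wick_empty, mul_one]
      refine Finset.prod_congr rfl fun ℓ hℓ => ?_
      rw [Finset.mem_sdiff, Finset.mem_singleton] at hℓ
      rw [Function.update_of_ne hℓ.2]
    have hP2 : ∀ (V : Finset ι) (ω : Ω), (∏ ℓ, wick μ y (Function.update Js ℓ₀ V ℓ) ω)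
        = (∏ ℓ ∈ Finset.univ \ {ℓ₀}, wick μ y (Js ℓ) ω) * wick μ y V ω := by
      intro V ω
      rw [Finset.prod_eq_prod_diff_singleton_mul (Finset.mem_univ ℓ₀), Function.update_self]
      congr 1
      refine Finset.prod_congr rfl fun ℓ hℓ => ?_
      rw [Finset.mem_sdiff, Finset.mem_singleton] at hℓ
      rw [Function.update_of_ne hℓ.2]
    have hP0 : ∀ ω : Ω, (∏ ℓ, wick μ y (Js ℓ) ω)
        = (∏ ℓ ∈ Finset.univ \ {ℓ₀}, wick μ y (Js ℓ) ω) * wick μ y K ω := by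
      intro ω
      rw [Finset.prod_eq_prod_diff_singleton_mul (Finset.mem_univ ℓ₀)]
    have hpt : ∀ ω : Ω, (∏ ℓ, wick μ y (Js ℓ) ω) * ∏ i ∈ J', y i ω
        = ((∏ ℓ, wick μ y (Function.update Js ℓ₀ ∅ ℓ) ω) * ∏ i ∈ K ∪ J', y i ω)
          - ∑ E ∈ S, mom μ y E *
              ((∏ ℓ, wick μ y (Function.update Js ℓ₀ (K \ E) ℓ) ω) * ∏ i ∈ J', y i ω) := by
      intro ω
      have hwK : wick μ y K ω = (∏ i ∈ K, y i ω) -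
          ∑ E ∈ S, mom μ y E * wick μ y (K \ E) ω := by
        rw [wick]
        rw [Finset.sum_attach S (fun E => mom μ y E * wick μ y (K \ E) ω)]
      rw [hP0, hP1, hwK, Finset.prod_union (hdJ' ℓ₀)]
      have hS2 : ∑ E ∈ S, mom μ y E *
            ((∏ ℓ, wick μ y (Function.update Js ℓ₀ (K \ E) ℓ) ω) * ∏ i ∈ J', y i ω)
          = ((∏ ℓ ∈ Finset.univ \ {ℓ₀}, wick μ y (Js ℓ) ω) *
              ∑ E ∈ S, mom μ y E * wick μ y (K \ E) ω) * ∏ i ∈ J', y i ω := by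
        rw [Finset.mul_sum, Finset.sum_mul]
        refine Finset.sum_congr rfl fun E hE => ?_
        rw [hP2]
        ring
      rw [hS2]
      ring
    have hfun : (fun ω => (∏ ℓ, wick μ y (Js ℓ) ω) * ∏ i ∈ J', y i ω)
        = fun ω => ((∏ ℓ, wick μ y (Function.update Js ℓ₀ ∅ ℓ) ω) * ∏ i ∈ K ∪ J', y i ω)
          - ∑ E ∈ S, mom μ y E *
              ((∏ ℓ, wick μ y (Function.update Js ℓ₀ (K \ E) ℓ) ω) * ∏ i ∈ J', y i ω) :=
      funext hpt
    -- first sub-call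
    have hd1 : ∀ ℓ ℓ', ℓ ≠ ℓ' → Disjoint (Function.update Js ℓ₀ ∅ ℓ) (Function.update Js ℓ₀ ∅ ℓ') := by
      intro ℓ ℓ' hne
      rcases eq_or_ne ℓ ℓ₀ with rfl | h1
      · simp
      · rcases eq_or_ne ℓ' ℓ₀ with rfl | h2
        · simp
        · rw [Function.update_of_ne h1, Function.update_of_ne h2]
          exact hdJ ℓ ℓ' hne
    have hd1' : ∀ ℓ, Disjoint (Function.update Js ℓ₀ ∅ ℓ) (K ∪ J') := by
      intro ℓ
      rcases eq_or_ne ℓ ℓ₀ with rfl | h1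
      · simp
      · rw [Function.update_of_ne h1, Finset.disjoint_union_right]
        exact ⟨hdJ ℓ ℓ₀ h1, hdJ' ℓ⟩
    have hm1 : (∑ ℓ, (Function.update Js ℓ₀ ∅ ℓ).card) < n := by
      rw [hupdcard ∅, Finset.card_empty, zero_add]
      have := Finset.card_pos.2 hKne
      omega
    obtain ⟨int1, eq1⟩ := IH _ hm1 L (Function.update Js ℓ₀ ∅) (K ∪ J') rfl hd1 hd1'
      (by rw [hG1]; exact hsub)
    -- sub-calls for each E
    have h2 : ∀ E ∈ S,
        Integrable (fun ω => (∏ ℓ, wick μ y (Function.update Js ℓ₀ (K \ E) ℓ) ω) *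
          ∏ i ∈ J', y i ω) μ ∧
        (∫ ω, (∏ ℓ, wick μ y (Function.update Js ℓ₀ (K \ E) ℓ) ω) * ∏ i ∈ J', y i ω ∂μ)
          = ∑ π ∈ partitionsOf (Finset.univ.sup (Function.update Js ℓ₀ (K \ E)) ∪ J'),
              ∏ A ∈ π, (cum μ y A *
                if ∀ ℓ, ¬ A ⊆ Function.update Js ℓ₀ (K \ E) ℓ then 1 else 0) := by
      intro E hE
      have hE' := hE
      rw [hSdef, Finset.mem_filter, Finset.mem_powerset] at hE'
      obtain ⟨hEK, hEne⟩ := hE'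
      have hEne' : E.Nonempty := Finset.nonempty_iff_ne_empty.2 hEne
      have hm2 : (∑ ℓ, (Function.update Js ℓ₀ (K \ E) ℓ).card) < n := by
        rw [hupdcard (K \ E), Finset.card_sdiff_of_subset hEK]
        have h1 := Finset.card_pos.2 hEne'
        have h2 := Finset.card_le_card hEK
        omega
      refine IH _ hm2 L (Function.update Js ℓ₀ (K \ E)) J' rfl ?_ ?_ ?_
      · intro ℓ ℓ' hne
        rcases eq_or_ne ℓ ℓ₀ with rfl | h1
        · rw [Function.update_self, Function.update_of_ne (Ne.symm hne)]
          exact (hdJ ℓ ℓ' hne).mono_left Finset.sdiff_subset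
        · rcases eq_or_ne ℓ' ℓ₀ with rfl | h2
          · rw [Function.update_self, Function.update_of_ne h1]
            exact (hdJ ℓ ℓ' hne).mono_right Finset.sdiff_subset
          · rw [Function.update_of_ne h1, Function.update_of_ne h2]
            exact hdJ ℓ ℓ' hne
      · intro ℓ
        rcases eq_or_ne ℓ ℓ₀ with rfl | h1
        · rw [Function.update_self]
          exact (hdJ' ℓ).mono_left Finset.sdiff_subset
        · rw [Function.update_of_ne h1]
          exact hdJ' ℓ
      · rw [hG2 E hE]
        exact Finset.sdiff_subset.trans hsub
    have intS : Integrable (fun ω => ∑ E ∈ S, mom μ y E *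
        ((∏ ℓ, wick μ y (Function.update Js ℓ₀ (K \ E) ℓ) ω) * ∏ i ∈ J', y i ω)) μ :=
      integrable_finset_sum S fun E hE => ((h2 E hE).1.const_mul _)
    constructor
    · rw [hfun]
      exact int1.sub intS
    · rw [hfun, integral_sub int1 intS, integral_finset_sum S
        (fun E hE => ((h2 E hE).1.const_mul _))]
      rw [eq1, hG1]
      have hsumE : ∀ E ∈ S, (∫ ω, mom μ y E *
            ((∏ ℓ, wick μ y (Function.update Js ℓ₀ (K \ E) ℓ) ω) * ∏ i ∈ J', y i ω) ∂μ)
          = mom μ y E * ∑ π ∈ partitionsOf ((Finset.univ.sup Js ∪ J') \ E),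
              ∏ A ∈ π, (cum μ y A * if ∀ ℓ, ¬ A ⊆ Js ℓ then 1 else 0) := by
        intro E hE
        have hE' := hE
        rw [hSdef, Finset.mem_filter, Finset.mem_powerset] at hE'
        obtain ⟨hEK, hEne⟩ := hE'
        rw [MeasureTheory.integral_const_mul, (h2 E hE).2, hG2 E hE]
        congr 1
        refine Finset.sum_congr rfl fun π hπ => Finset.prod_congr rfl fun A hA => ?_
        have hAE : Disjoint A E := by
          rw [Finset.disjoint_left]
          intro x hxA hxE
          have := blocks_subset hπ hA hxA
          rw [Finset.mem_sdiff] at this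
          exact this.2 hxE
        congr 1
        apply if_congr _ rfl rfl
        constructor
        · intro h ℓ hAJ
          rcases eq_or_ne ℓ ℓ₀ with hq | hne
          · refine h ℓ₀ ?_
            rw [Function.update_self, Finset.subset_sdiff]
            exact ⟨show A ⊆ Js ℓ₀ by rw [← hq]; exact hAJ, hAE⟩
          · exact h ℓ (by rw [Function.update_of_ne hne]; exact hAJ)
        · intro h ℓ hAJ
          rcases eq_or_ne ℓ ℓ₀ with hq | hne
          · subst hq
            rw [Function.update_self, Finset.subset_sdiff] at hAJ
            exact h ℓ hAJ.1
          · rw [Function.update_of_ne hne] at hAJ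
            exact h ℓ hAJ
      rw [Finset.sum_congr rfl hsumE]
      -- now apply the combinatorial step identity
      have hcomb := comb_step μ y hKG
        (fun A => if ∀ ℓ, ¬ A ⊆ Js ℓ then (1 : ℝ) else 0)
        (fun A => if ∀ ℓ, ¬ A ⊆ Function.update Js ℓ₀ ∅ ℓ then (1 : ℝ) else 0)
        (fun B hBne hBK => by
          show (if ∀ ℓ, ¬ B ⊆ Function.update Js ℓ₀ ∅ ℓ then (1 : ℝ) else 0) = 1
          rw [if_pos]
          intro ℓ hBJ
          rcases eq_or_ne ℓ ℓ₀ with hq | hne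
          · subst hq
            rw [Function.update_self] at hBJ
            rcases hBne with ⟨x, hx⟩
            exact Finset.notMem_empty x (hBJ hx)
          · rw [Function.update_of_ne hne] at hBJ
            rcases hBne with ⟨x, hx⟩
            exact Finset.disjoint_left.1 (hdJ ℓ ℓ₀ hne) (hBJ hx) (hBK hx))
        (fun B hBne hBK => by
          show (if ∀ ℓ, ¬ B ⊆ Js ℓ then (1 : ℝ) else 0)
            = (if ∀ ℓ, ¬ B ⊆ Function.update Js ℓ₀ ∅ ℓ then (1 : ℝ) else 0)
          apply if_congr _ rfl rfl
          constructor
          · intro h ℓ hBJ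
            rcases eq_or_ne ℓ ℓ₀ with hq | hne
            · subst hq
              rw [Function.update_self] at hBJ
              rcases hBne with ⟨x, hx⟩
              exact Finset.notMem_empty x (hBJ hx)
            · rw [Function.update_of_ne hne] at hBJ
              exact h ℓ hBJ
          · intro h ℓ hBJ
            rcases eq_or_ne ℓ ℓ₀ with hq | hne
            · subst hq
              exact absurd hBJ hBK
            · exact h ℓ (by rw [Function.update_of_ne hne]; exact hBJ))
        (fun B hBne hBK => by
          show (if ∀ ℓ, ¬ B ⊆ Js ℓ then (1 : ℝ) else 0) = 0
          rw [if_neg]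
          push_neg
          exact ⟨ℓ₀, hBK⟩)
      rw [hcomb]
      -- separate the empty set from the powerset sum
      have hsplit : ∑ E ∈ K.powerset, mom μ y E *
            ∑ π ∈ partitionsOf ((Finset.univ.sup Js ∪ J') \ E),
              ∏ A ∈ π, (cum μ y A * if ∀ ℓ, ¬ A ⊆ Js ℓ then 1 else 0)
          = mom μ y ∅ * (∑ π ∈ partitionsOf ((Finset.univ.sup Js ∪ J') \ ∅),
              ∏ A ∈ π, (cum μ y A * if ∀ ℓ, ¬ A ⊆ Js ℓ then 1 else 0))
            + ∑ E ∈ S, mom μ y E *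
                ∑ π ∈ partitionsOf ((Finset.univ.sup Js ∪ J') \ E),
                  ∏ A ∈ π, (cum μ y A * if ∀ ℓ, ¬ A ⊆ Js ℓ then 1 else 0) := by
      -- split using the filter decomposition
        rw [← Finset.sum_filter_add_sum_filter_not K.powerset (fun E => E = ∅)]
        congr 1
        · have : K.powerset.filter (fun E => E = ∅) = {∅} := by
            ext E
            simp only [Finset.mem_filter, Finset.mem_powerset, Finset.mem_singleton]
            constructor
            · exact fun h => h.2
            · rintro rfl; exact ⟨Finset.empty_subset K, rfl⟩
          rw [this, Finset.sum_singleton]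
      rw [hsplit, mom_empty, one_mul, Finset.sdiff_empty]
      ring
end
/-- product formula for multiple Wick polynomials. -/
theorem wick_product_formula {Ω : Type*} [MeasurableSpace Ω] {ι : Type*} [DecidableEq ι]
    (μ : Measure Ω) [IsProbabilityMeasure μ] (y : ι → Ω → ℝ)
    (N L : ℕ) (Js : Fin L → Finset ι) (J' : Finset ι)
    (hdJ : ∀ ℓ ℓ', ℓ ≠ ℓ' → Disjoint (Js ℓ) (Js ℓ'))
    (hdJ' : ∀ ℓ, Disjoint (Js ℓ) J')
    (hN : J'.card + ∑ ℓ, (Js ℓ).card ≤ N)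
    (hint : ∀ A : Finset ι, A.card ≤ N → A ⊆ Finset.univ.sup Js ∪ J' →
      Integrable (fun ω => ∏ i ∈ A, y i ω) μ) :
    (∫ ω, (∏ ℓ, wick μ y (Js ℓ) ω) * ∏ i ∈ J', y i ω ∂μ)
      = ∑ π ∈ partitionsOf (Finset.univ.sup Js ∪ J'),
          ∏ A ∈ π, (cum μ y A * if ∀ ℓ, ¬ A ⊆ Js ℓ then 1 else 0) := by
  have hint' : ∀ A : Finset ι, A ⊆ Finset.univ.sup Js ∪ J' →
      Integrable (fun ω => ∏ i ∈ A, y i ω) μ := by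
    intro A hA
    refine hint A ?_ hA
    have h1 : A.card ≤ (Finset.univ.sup Js ∪ J').card := Finset.card_le_card hA
    have h2 : (Finset.univ.sup Js ∪ J').card ≤ (Finset.univ.sup Js).card + J'.card :=
      Finset.card_union_le _ _
    have h3 : (Finset.univ.sup Js).card ≤ ∑ ℓ, (Js ℓ).card := by
      rw [Finset.sup_eq_biUnion]
      exact Finset.card_biUnion_le
    omega
  exact (wick_aux μ y _ hint' _ L Js J' rfl hdJ hdJ' (Finset.Subset.refl _)).2
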